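/- Let m₀Y, m₀S, m₁Y, ΔS, y̲, ȳ ∈ ℝ with m₀S > 0, ΔS > 0, and suppose there exist a, b ∈ [y̲, ȳ] with m₁Y = a·m₀S + b·ΔS and c ∈ [y̲, ȳ] with m₀Y = c·m₀S. Then the treatment effect δ := a − c satisfies max{(m₁Y − ȳ·ΔS)/m₀S, y̲} − m₀Y/m₀S ≤ δ ≤ min{(m₁Y − y̲·ΔS)/m₀S, ȳ} − m₀Y/m₀S. -/

import Mathlib

/-- Bounds for the MTE within the always-observed subpopulation
(Corollary 3.2, bounded-support case). -/
theorem stmt_3 (m₀Y m₀S m₁Y ΔS ylo yhi a b c : ℝ)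
    (hm₀S : 0 < m₀S) (hΔS : 0 < ΔS)
    (ha : a ∈ Set.Icc ylo yhi) (hb : b ∈ Set.Icc ylo yhi) (hc : c ∈ Set.Icc ylo yhi)
    (hdec : m₁Y = a * m₀S + b * ΔS) (hc' : m₀Y = c * m₀S) :
    max ((m₁Y - yhi * ΔS) / m₀S) ylo - m₀Y / m₀S ≤ a - c ∧
      a - c ≤ min ((m₁Y - ylo * ΔS) / m₀S) yhi - m₀Y / m₀S := by
  have hcc : m₀Y / m₀S = c := by field_simp [hc']; rw [hc']; ring
  have h1 : (m₁Y - yhi * ΔS) / m₀S ≤ a := by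
    rw [div_le_iff₀ hm₀S, hdec]
    nlinarith [hb.2]
  have h2 : a ≤ (m₁Y - ylo * ΔS) / m₀S := by
    rw [le_div_iff₀ hm₀S, hdec]
    nlinarith [hb.1]
  rw [hcc]
  exact ⟨sub_le_sub_right (max_le h1 ha.1) c, sub_le_sub_right (le_min h2 ha.2) c⟩
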